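/- Let a<b be reals and f ∈ C¹([a,b],ℝ) be such that |f(x)| + |f'(x)| > 0 for all x ∈ [a,b], and f(a) ≠ 0, f(b) ≠ 0. Then the set of zeros of f in [a,b] is finite, and its cardinality Z([a,b]) satisfies Z([a,b]) = lim_{δ→0⁺} (1/(2δ)) ∫_a^b |f'(x)| 1_{{|f(x)| < δ}} dx. -/

import Mathlib

open MeasureTheory Filter

lemma local_kac {g g' : ℝ → ℝ} {z r δ : ℝ} (hr : 0 < r)
    (hderiv : ∀ x ∈ Set.Icc (z - r) (z + r), HasDerivAt g (g' x) x)
    (hcont : ContinuousOn g' (Set.Icc (z - r) (z + r)))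
    (hpos : ∀ x ∈ Set.Icc (z - r) (z + r), 0 < g' x)
    (hz : g z = 0) (hδ : 0 < δ)
    (hδl : δ < -g (z - r)) (hδr : δ < g (z + r)) :
    ∃ c d, c ∈ Set.Icc (z - r) (z + r) ∧ d ∈ Set.Icc (z - r) (z + r) ∧ c < d ∧
      (∀ x ∈ Set.Icc (z - r) (z + r), (|g x| < δ ↔ x ∈ Set.Ioo c d)) ∧
      ∫ x in Set.Ioo c d, |g' x| = 2 * δ := by
  have hsub : z - r ≤ z + r := by linarith
  have hzmem : z ∈ Set.Icc (z - r) (z + r) := by constructor <;> linarith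
  have hgc : ContinuousOn g (Set.Icc (z - r) (z + r)) := fun x hx =>
    (hderiv x hx).continuousAt.continuousWithinAt
  have hmono : StrictMonoOn g (Set.Icc (z - r) (z + r)) := by
    apply strictMonoOn_of_deriv_pos (convex_Icc _ _) hgc
    intro x hx
    rw [interior_Icc] at hx
    rw [(hderiv x (Set.Ioo_subset_Icc_self hx)).deriv]
    exact hpos x (Set.Ioo_subset_Icc_self hx)
  obtain ⟨c, hcmem, hc⟩ : ∃ c ∈ Set.Icc (z - r) z, g c = -δ := by
    have : (-δ : ℝ) ∈ Set.Icc (g (z - r)) (g z) := by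
      constructor <;> [linarith; linarith]
    obtain ⟨c, hc1, hc2⟩ := intermediate_value_Icc (by linarith : z - r ≤ z)
      (hgc.mono (by intro x hx; exact ⟨hx.1, by linarith [hx.2]⟩)) this
    exact ⟨c, hc1, hc2⟩
  obtain ⟨d, hdmem, hd⟩ : ∃ d ∈ Set.Icc z (z + r), g d = δ := by
    have : (δ : ℝ) ∈ Set.Icc (g z) (g (z + r)) := by
      constructor <;> [linarith; linarith]
    obtain ⟨d, hd1, hd2⟩ := intermediate_value_Icc (by linarith : z ≤ z + r)
      (hgc.mono (by intro x hx; exact ⟨by linarith [hx.1], hx.2⟩)) this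
    exact ⟨d, hd1, hd2⟩
  have hcI : c ∈ Set.Icc (z - r) (z + r) := ⟨hcmem.1, by linarith [hcmem.2]⟩
  have hdI : d ∈ Set.Icc (z - r) (z + r) := ⟨by linarith [hdmem.1], hdmem.2⟩
  have hcd : c < d := by
    rw [← hmono.lt_iff_lt hcI hdI]; rw [hc, hd]; linarith
  refine ⟨c, d, hcI, hdI, hcd, ?_, ?_⟩
  · intro x hx
    rw [abs_lt]
    constructor
    · rintro ⟨h1, h2⟩
      constructor
      · rw [← hmono.lt_iff_lt hcI hx, hc]; linarith
      · rw [← hmono.lt_iff_lt hx hdI, hd]; linarith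
    · rintro ⟨h1, h2⟩
      constructor
      · have := hmono.lt_iff_lt hcI hx |>.mpr h1; rw [hc] at this; linarith
      · have := hmono.lt_iff_lt hx hdI |>.mpr h2; rw [hd] at this; linarith
  · have hIcd : Set.Icc c d ⊆ Set.Icc (z - r) (z + r) := Set.Icc_subset_Icc hcI.1 hdI.2
    have hint : IntervalIntegrable g' volume c d := by
      apply ContinuousOn.intervalIntegrable
      rw [Set.uIcc_of_le hcd.le]
      exact hcont.mono hIcd
    have : ∫ x in Set.Ioo c d, |g' x| = ∫ x in Set.Ioo c d, g' x := by
      apply setIntegral_congr_fun measurableSet_Ioo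
      intro x hx
      exact abs_of_pos (hpos x (hIcd (Set.Ioo_subset_Icc_self hx)))
    rw [this, ← integral_Ioc_eq_integral_Ioo, ← intervalIntegral.integral_of_le hcd.le]
    rw [intervalIntegral.integral_eq_sub_of_hasDerivAt
      (fun x hx => hderiv x (hIcd (by rwa [Set.uIcc_of_le hcd.le] at hx))) hint]
    rw [hc, hd]; ring

lemma local_kac2 {f f' : ℝ → ℝ} {z r δ : ℝ} (hr : 0 < r)
    (hderiv : ∀ x ∈ Set.Icc (z - r) (z + r), HasDerivAt f (f' x) x)
    (hcont : ContinuousOn f' (Set.Icc (z - r) (z + r)))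
    (hsign : (∀ x ∈ Set.Icc (z - r) (z + r), 0 < f' x) ∨
             (∀ x ∈ Set.Icc (z - r) (z + r), f' x < 0))
    (hz : f z = 0) (hδ : 0 < δ)
    (hδl : δ < |f (z - r)|) (hδr : δ < |f (z + r)|) :
    ∃ c d, c ∈ Set.Icc (z - r) (z + r) ∧ d ∈ Set.Icc (z - r) (z + r) ∧ c < d ∧
      (∀ x ∈ Set.Icc (z - r) (z + r), (|f x| < δ ↔ x ∈ Set.Ioo c d)) ∧
      ∫ x in Set.Ioo c d, |f' x| = 2 * δ := by
  have hzmem : z ∈ Set.Icc (z - r) (z + r) := ⟨by linarith, by linarith⟩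
  have hlm : z - r ∈ Set.Icc (z - r) (z + r) := ⟨le_refl _, by linarith⟩
  have hrm : z + r ∈ Set.Icc (z - r) (z + r) := ⟨by linarith, le_refl _⟩
  rcases hsign with hpos | hneg
  · have hmono : StrictMonoOn f (Set.Icc (z - r) (z + r)) := by
      apply strictMonoOn_of_deriv_pos (convex_Icc _ _)
        (fun x hx => (hderiv x hx).continuousAt.continuousWithinAt)
      intro x hx
      rw [interior_Icc] at hx
      rw [(hderiv x (Set.Ioo_subset_Icc_self hx)).deriv]
      exact hpos x (Set.Ioo_subset_Icc_self hx)
    have h1 : f (z - r) < 0 := by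
      have := hmono hlm hzmem (by linarith); rwa [hz] at this
    have h2 : 0 < f (z + r) := by
      have := hmono hzmem hrm (by linarith); rwa [hz] at this
    exact local_kac hr hderiv hcont hpos hz hδ
      (by rwa [abs_of_neg h1] at hδl) (by rwa [abs_of_pos h2] at hδr)
  · have hderiv' : ∀ x ∈ Set.Icc (z - r) (z + r),
        HasDerivAt (fun y => -f y) ((fun y => -f' y) x) x :=
      fun x hx => (hderiv x hx).neg
    have hcont' : ContinuousOn (fun y => -f' y) (Set.Icc (z - r) (z + r)) := hcont.neg
    have hpos' : ∀ x ∈ Set.Icc (z - r) (z + r), 0 < -f' x :=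
      fun x hx => by linarith [hneg x hx]
    have hmono : StrictMonoOn (fun y => -f y) (Set.Icc (z - r) (z + r)) := by
      apply strictMonoOn_of_deriv_pos (convex_Icc _ _)
        (fun x hx => (hderiv' x hx).continuousAt.continuousWithinAt)
      intro x hx
      rw [interior_Icc] at hx
      rw [(hderiv' x (Set.Ioo_subset_Icc_self hx)).deriv]
      exact hpos' x (Set.Ioo_subset_Icc_self hx)
    have h1 : -f (z - r) < 0 := by
      have := hmono hlm hzmem (by linarith)
      simp only [hz, neg_zero] at this; exact this
    have h2 : 0 < -f (z + r) := by
      have := hmono hzmem hrm (by linarith)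
      simp only [hz, neg_zero] at this; exact this
    obtain ⟨c, d, hcI, hdI, hcd, hiff, hint⟩ := local_kac hr hderiv' hcont' hpos'
      (by simp [hz]) hδ
      (by rw [show |f (z-r)| = -(-f (z-r)) by
            rw [abs_of_pos (by linarith : 0 < f (z-r))]; ring] at hδl; simpa using hδl)
      (by rwa [abs_of_neg (by linarith : f (z+r) < 0)] at hδr)
    refine ⟨c, d, hcI, hdI, hcd, ?_, ?_⟩
    · intro x hx; rw [← abs_neg]; exact hiff x hx
    · rw [← hint]; congr 1; ext x; rw [abs_neg]

theorem statement10
    (a b : ℝ) (hab : a < b) (f f' : ℝ → ℝ)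
    (hderiv : ∀ x ∈ Set.Icc a b, HasDerivWithinAt f (f' x) (Set.Icc a b) x)
    (hcont : ContinuousOn f' (Set.Icc a b))
    (hnz : ∀ x ∈ Set.Icc a b, 0 < |f x| + |f' x|)
    (ha : f a ≠ 0) (hb : f b ≠ 0) :
    {x ∈ Set.Icc a b | f x = 0}.Finite ∧
      Tendsto
        (fun δ : ℝ => (∫ x in a..b, if |f x| < δ then |f' x| else 0) / (2 * δ))
        (nhdsWithin 0 (Set.Ioi 0))
        (nhds (({x ∈ Set.Icc a b | f x = 0}.ncard : ℝ))) := by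
  have hfc : ContinuousOn f (Set.Icc a b) := fun x hx => (hderiv x hx).continuousWithinAt
  set Z := {x ∈ Set.Icc a b | f x = 0} with hZdef
  have hZsub : Z ⊆ Set.Icc a b := fun x hx => hx.1
  have hf'z : ∀ z ∈ Z, f' z ≠ 0 := by
    rintro z ⟨hzI, hz0⟩ h
    have := hnz z hzI
    rw [hz0, h] at this; simp at this
  have hZIoo : ∀ z ∈ Z, z ∈ Set.Ioo a b := by
    rintro z ⟨hzI, hz0⟩
    refine ⟨lt_of_le_of_ne hzI.1 fun h => ha (by rw [h]; exact hz0), ?_⟩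
    exact lt_of_le_of_ne hzI.2 fun h => hb (by rw [← h]; exact hz0)
  -- isolation of zeros
  have hiso : ∀ z ∈ Z, ∃ ε > 0, ∀ x ∈ Z, |x - z| < ε → x = z := by
    intro z hz
    have hd := hderiv z (hZsub hz)
    rw [hasDerivWithinAt_iff_tendsto_slope] at hd
    have hne : {y : ℝ | y ≠ 0} ∈ nhds (f' z) := isOpen_ne.mem_nhds (hf'z z hz)
    have hev := hd.eventually hne
    rw [eventually_nhdsWithin_iff, Metric.eventually_nhds_iff] at hev
    obtain ⟨ε, hε, h⟩ := hev
    refine ⟨ε, hε, fun x hx hxz => ?_⟩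
    by_contra hne'
    have hsl : slope f z x ≠ 0 := h (by rwa [Real.dist_eq]) ⟨hZsub hx, hne'⟩
    apply hsl
    rw [slope_def_field, hx.2, hz.2]
    simp
  -- compactness / finiteness
  have hZclosed : IsClosed Z := by
    have : Z = Set.Icc a b ∩ f ⁻¹' {0} := by
      ext x; simp [hZdef, Set.mem_setOf_eq]
    rw [this]
    exact hfc.preimage_isClosed_of_isClosed isClosed_Icc isClosed_singleton
  have hZc : IsCompact Z := IsCompact.of_isClosed_subset isCompact_Icc hZclosed hZsub
  have hfin : Z.Finite := by
    choose! ε hε hεP using hiso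
    obtain ⟨t, htZ, htfin, hcover⟩ := hZc.elim_finite_subcover_image
      (b := Z) (c := fun z => Metric.ball z (ε z)) (fun z _ => Metric.isOpen_ball)
      (fun x hx => Set.mem_biUnion hx (Metric.mem_ball_self (hε x hx)))
    apply htfin.subset
    intro x hx
    obtain ⟨z, hzt, hxz⟩ := Set.mem_iUnion₂.mp (hcover hx)
    have hxe : |x - z| < ε z := by rwa [← Real.dist_eq]
    have := hεP z (htZ hzt) x hx hxe
    rwa [this]
  refine ⟨hfin, ?_⟩
  -- real derivative on the interior
  have hderivAt : ∀ x ∈ Set.Ioo a b, HasDerivAt f (f' x) x :=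
    fun x hx => (hderiv x (Set.Ioo_subset_Icc_self hx)).hasDerivAt (Icc_mem_nhds hx.1 hx.2)
  -- choose radii
  have hrad : ∀ z ∈ Z, ∃ r, 0 < r ∧ Set.Icc (z - r) (z + r) ⊆ Set.Ioo a b ∧
      (∀ x ∈ Set.Icc (z - r) (z + r), |f' x - f' z| < |f' z|) ∧
      (∀ x ∈ Set.Icc (z - r) (z + r), f x = 0 → x = z) ∧
      (∀ w ∈ Z, w ≠ z → 2 * r < |z - w|) := by
    intro z hz
    obtain ⟨hza, hzb⟩ := hZIoo z hz
    have hc := hcont z (hZsub hz)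
    rw [Metric.continuousWithinAt_iff] at hc
    obtain ⟨ρ3, hρ3, h3⟩ := hc |f' z| (abs_pos.mpr (hf'z z hz))
    obtain ⟨ε, hε0, hεP⟩ := hiso z hz
    obtain ⟨ρ4, hρ40, h4⟩ : ∃ ρ > 0, ∀ w ∈ Z, w ≠ z → ρ ≤ |z - w| := by
      have hcl : IsClosed (Z \ {z}) := (Set.Finite.diff hfin : (Z \ {z}).Finite).isClosed
      have hzn : z ∈ (Z \ {z})ᶜ := by simp
      have hmem := hcl.isOpen_compl.mem_nhds hzn
      rw [Metric.mem_nhds_iff] at hmem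
      obtain ⟨ρ, hρ, hball⟩ := hmem
      refine ⟨ρ, hρ, fun w hw hwz => ?_⟩
      by_contra hlt; push_neg at hlt
      have hwb : w ∈ Metric.ball z ρ := by
        rw [Metric.mem_ball, Real.dist_eq, abs_sub_comm]; linarith
      exact (hball hwb) ⟨hw, hwz⟩
    set m1 := min (z - a) (b - z) with hm1
    have hm1a : m1 ≤ z - a := min_le_left _ _
    have hm1b : m1 ≤ b - z := min_le_right _ _
    have hm1pos : 0 < m1 := lt_min (by linarith) (by linarith)
    refine ⟨min (min (m1/2) (ε/2)) (min (ρ3/2) (ρ4/3)), ?_, ?_, ?_, ?_, ?_⟩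
    · exact lt_min (lt_min (by linarith) (by linarith)) (lt_min (by linarith) (by linarith))
    all_goals
      set r := min (min (m1/2) (ε/2)) (min (ρ3/2) (ρ4/3)) with hrdef
      have hr1 : r ≤ m1/2 := le_trans (min_le_left _ _) (min_le_left _ _)
      have hr2 : r ≤ ε/2 := le_trans (min_le_left _ _) (min_le_right _ _)
      have hr3 : r ≤ ρ3/2 := le_trans (min_le_right _ _) (min_le_left _ _)
      have hr4 : r ≤ ρ4/3 := le_trans (min_le_right _ _) (min_le_right _ _)
    · intro x hx
      constructor
      · have := hx.1; linarith
      · have := hx.2; linarith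
    · intro x hx
      have hxI : x ∈ Set.Icc a b := by
        constructor
        · have := hx.1; linarith
        · have := hx.2; linarith
      have hdist : dist x z < ρ3 := by
        rw [Real.dist_eq, abs_lt]
        exact ⟨by linarith [hx.1], by linarith [hx.2]⟩
      have := h3 hxI hdist
      rwa [Real.dist_eq] at this
    · intro x hx hfx
      have hxI : x ∈ Set.Icc a b := by
        constructor
        · have := hx.1; linarith
        · have := hx.2; linarith
      exact hεP x ⟨hxI, hfx⟩ (by rw [abs_lt]; exact ⟨by linarith [hx.1], by linarith [hx.2]⟩)
    · intro w hw hwz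
      have := h4 w hw hwz
      linarith
  choose! r hr0 hrsub hrc hru hrd using hrad
  -- constant sign of f' on each interval
  have hsign : ∀ z ∈ Z, (∀ x ∈ Set.Icc (z - r z) (z + r z), 0 < f' x) ∨
      (∀ x ∈ Set.Icc (z - r z) (z + r z), f' x < 0) := by
    intro z hz
    rcases (hf'z z hz).lt_or_gt with h | h
    · right
      intro x hx
      have := hrc z hz x hx
      rw [abs_of_neg h, abs_lt] at this
      linarith [this.2]
    · left
      intro x hx
      have := hrc z hz x hx
      rw [abs_of_pos h, abs_lt] at this
      linarith [this.1]
  -- endpoints nonzero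
  have hend : ∀ z ∈ Z, f (z - r z) ≠ 0 ∧ f (z + r z) ≠ 0 := by
    intro z hz
    constructor
    · intro h
      have := hru z hz (z - r z) ⟨le_refl _, by linarith [hr0 z hz]⟩ h
      linarith [hr0 z hz, this]
    · intro h
      have := hru z hz (z + r z) ⟨by linarith [hr0 z hz], le_refl _⟩ h
      linarith [hr0 z hz, this]
  -- the compact "far from zeros" set
  set U := ⋃ z ∈ Z, Set.Ioo (z - r z) (z + r z) with hUdef
  have hUopen : IsOpen U := isOpen_biUnion fun z _ => isOpen_Ioo
  set K := Set.Icc a b \ U with hKdef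
  have hKc : IsCompact K := isCompact_Icc.diff hUopen
  have haK : a ∈ K := by
    refine ⟨⟨le_refl _, hab.le⟩, ?_⟩
    intro hU
    obtain ⟨z, hz, hxz⟩ := Set.mem_iUnion₂.mp hU
    exact absurd ((hrsub z hz (Set.Ioo_subset_Icc_self hxz)).1) (lt_irrefl a)
  obtain ⟨x₀, hx₀K, hx₀min⟩ := hKc.exists_isMinOn ⟨a, haK⟩ ((hfc.mono Set.diff_subset).abs)
  set ε := |f x₀| with hεdef
  have hεpos : 0 < ε := by
    rw [hεdef, abs_pos]
    intro h
    have hx₀Z : x₀ ∈ Z := ⟨hx₀K.1, h⟩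
    apply hx₀K.2
    exact Set.mem_biUnion hx₀Z ⟨by linarith [hr0 x₀ hx₀Z], by linarith [hr0 x₀ hx₀Z]⟩
  have hεle : ∀ x ∈ K, ε ≤ |f x| := fun x hx => hx₀min hx
  -- δ₀ : lower bound on endpoint values
  set T := hfin.toFinset with hTdef
  obtain ⟨δ₀, hδ₀pos, hδ₀⟩ : ∃ d, 0 < d ∧
      ∀ z ∈ Z, d ≤ min |f (z - r z)| |f (z + r z)| := by
    rcases T.eq_empty_or_nonempty with hT | hT
    · refine ⟨1, one_pos, fun z hz => ?_⟩
      exfalso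
      have hmem : z ∈ T := hfin.mem_toFinset.mpr hz
      rw [hT] at hmem
      exact Finset.notMem_empty z hmem
    · refine ⟨T.inf' hT (fun z => min |f (z - r z)| |f (z + r z)|), ?_, ?_⟩
      · rw [Finset.lt_inf'_iff]
        intro z hzT
        have hz := hfin.mem_toFinset.mp hzT
        exact lt_min (abs_pos.mpr (hend z hz).1) (abs_pos.mpr (hend z hz).2)
      · intro z hz
        exact Finset.inf'_le _ (hfin.mem_toFinset.mpr hz)
  set δ₁ := min ε δ₀ with hδ₁def
  have hδ₁pos : 0 < δ₁ := lt_min hεpos hδ₀pos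
  -- disjointness of the intervals
  have hIdisj : ∀ z ∈ Z, ∀ w ∈ Z, z ≠ w → ∀ x,
      x ∈ Set.Icc (z - r z) (z + r z) → x ∉ Set.Icc (w - r w) (w + r w) := by
    intro z hz w hw hzw x hxz hxw
    have h1 : |x - z| ≤ r z := abs_le.mpr ⟨by linarith [hxz.1], by linarith [hxz.2]⟩
    have h2 : |x - w| ≤ r w := abs_le.mpr ⟨by linarith [hxw.1], by linarith [hxw.2]⟩
    have h3 := hrd z hz w hw (Ne.symm hzw)
    have h4 := hrd w hw z hz hzw
    have h5 : |z - w| ≤ |x - z| + |x - w| := by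
      calc |z - w| = |(x - w) - (x - z)| := by ring_nf
        _ ≤ |x - w| + |x - z| := abs_sub _ _
        _ = |x - z| + |x - w| := by ring
    rw [abs_sub_comm w z] at h4
    linarith
  -- main computation
  have key : ∀ δ ∈ Set.Ioo (0:ℝ) δ₁,
      (∫ x in a..b, if |f x| < δ then |f' x| else 0) = 2 * δ * Z.ncard := by
    rintro δ ⟨hδ0, hδ1⟩
    have hδε : δ < ε := lt_of_lt_of_le hδ1 (min_le_left _ _)
    have hδδ₀ : δ < δ₀ := lt_of_lt_of_le hδ1 (min_le_right _ _)
    have hcd : ∀ z ∈ Z, ∃ c d, c ∈ Set.Icc (z - r z) (z + r z) ∧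
        d ∈ Set.Icc (z - r z) (z + r z) ∧ c < d ∧
        (∀ x ∈ Set.Icc (z - r z) (z + r z), (|f x| < δ ↔ x ∈ Set.Ioo c d)) ∧
        ∫ x in Set.Ioo c d, |f' x| = 2 * δ := by
      intro z hz
      have hsubIcc : Set.Icc (z - r z) (z + r z) ⊆ Set.Icc a b :=
        (hrsub z hz).trans Set.Ioo_subset_Icc_self
      exact local_kac2 (hr0 z hz) (fun x hx => hderivAt x (hrsub z hz hx))
        (hcont.mono hsubIcc) (hsign z hz) hz.2 hδ0
        (lt_of_lt_of_le hδδ₀ ((hδ₀ z hz).trans (min_le_left _ _)))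
        (lt_of_lt_of_le hδδ₀ ((hδ₀ z hz).trans (min_le_right _ _)))
    choose! c d hcI hdI hcdlt hiff hint using hcd
    have hIoosub : ∀ z ∈ Z, Set.Ioo (c z) (d z) ⊆ Set.Icc (z - r z) (z + r z) :=
      fun z hz => (Set.Ioo_subset_Icc_self).trans (Set.Icc_subset_Icc (hcI z hz).1 (hdI z hz).2)
    have hEq : ∀ x ∈ Set.Icc a b, (if |f x| < δ then |f' x| else 0) =
        ∑ z ∈ T, Set.indicator (Set.Ioo (c z) (d z)) (fun y => |f' y|) x := by
      intro x hx
      by_cases hfx : |f x| < δ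
      · rw [if_pos hfx]
        have hxK : x ∉ K := by
          intro hK
          exact absurd hfx (not_lt.mpr (le_trans hδε.le (hεle x hK)))
        have hxU : x ∈ U := by
          by_contra h
          exact hxK ⟨hx, h⟩
        obtain ⟨z, hz, hxz⟩ := Set.mem_iUnion₂.mp hxU
        have hxzI : x ∈ Set.Icc (z - r z) (z + r z) := Set.Ioo_subset_Icc_self hxz
        have hxcd : x ∈ Set.Ioo (c z) (d z) := (hiff z hz x hxzI).mp hfx
        rw [Finset.sum_eq_single_of_mem z (hfin.mem_toFinset.mpr hz)]
        · rw [Set.indicator_of_mem hxcd]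
        · intro w hwT hwz
          apply Set.indicator_of_notMem
          intro hxw
          exact hIdisj z hz w (hfin.mem_toFinset.mp hwT) (Ne.symm hwz) x hxzI
            (hIoosub w (hfin.mem_toFinset.mp hwT) hxw)
      · rw [if_neg hfx]
        symm
        apply Finset.sum_eq_zero
        intro w hwT
        apply Set.indicator_of_notMem
        intro hxw
        have hwZ := hfin.mem_toFinset.mp hwT
        exact hfx ((hiff w hwZ x (hIoosub w hwZ hxw)).mpr hxw)
    have hintegrable : ∀ z ∈ T,
        Integrable (Set.indicator (Set.Ioo (c z) (d z)) (fun y => |f' y|)) volume := by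
      intro z hzT
      have hzZ := hfin.mem_toFinset.mp hzT
      have hsubIcc : Set.Icc (c z) (d z) ⊆ Set.Icc a b :=
        (Set.Icc_subset_Icc (hcI z hzZ).1 (hdI z hzZ).2).trans
          ((hrsub z hzZ).trans Set.Ioo_subset_Icc_self)
      have : IntegrableOn (fun y => |f' y|) (Set.Ioo (c z) (d z)) :=
        ((hcont.abs.mono hsubIcc).integrableOn_Icc).mono_set Set.Ioo_subset_Icc_self
      exact this.integrable_indicator measurableSet_Ioo
    calc (∫ x in a..b, if |f x| < δ then |f' x| else 0)
        = ∫ x in Set.Ioc a b, (if |f x| < δ then |f' x| else 0) :=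
          intervalIntegral.integral_of_le hab.le
      _ = ∫ x in Set.Ioc a b,
            (∑ z ∈ T, Set.indicator (Set.Ioo (c z) (d z)) (fun y => |f' y|) x) :=
          setIntegral_congr_fun measurableSet_Ioc
            (fun x hx => hEq x (Set.Ioc_subset_Icc_self hx))
      _ = ∫ x, (∑ z ∈ T, Set.indicator (Set.Ioo (c z) (d z)) (fun y => |f' y|) x) := by
          apply setIntegral_eq_integral_of_forall_compl_eq_zero
          intro x hx
          apply Finset.sum_eq_zero
          intro w hwT
          apply Set.indicator_of_notMem
          intro hxw
          have hwZ := hfin.mem_toFinset.mp hwT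
          exact hx (Set.Ioo_subset_Ioc_self (hrsub w hwZ (hIoosub w hwZ hxw)))
      _ = ∑ z ∈ T, ∫ x, Set.indicator (Set.Ioo (c z) (d z)) (fun y => |f' y|) x :=
          integral_finset_sum T hintegrable
      _ = ∑ z ∈ T, (2 * δ) := by
          apply Finset.sum_congr rfl
          intro z hzT
          rw [integral_indicator measurableSet_Ioo]
          exact hint z (hfin.mem_toFinset.mp hzT)
      _ = 2 * δ * Z.ncard := by
          rw [Finset.sum_const, Set.ncard_eq_toFinset_card Z hfin]
          simp [mul_comm, hTdef]
  -- conclude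
  apply Filter.Tendsto.congr' ?_ tendsto_const_nhds
  filter_upwards [Ioo_mem_nhdsGT_of_mem ⟨le_refl (0:ℝ), hδ₁pos⟩] with δ hδ
  rw [key δ hδ]
  have hδ0 : (0:ℝ) < δ := hδ.1
  field_simp
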